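/- Let X be a topological vector space over ℝ, let A, B ⊆ X be non-meager Baire sets, and let U₁, U₂ ⊆ X be open sets such that A Δ U₁ and B Δ U₂ are meager. Then U₁ − U₂ ⊆ A − B; that is, for every t ∈ U₁ − U₂ one has A ∩ (t + B) ≠ ∅. -/

import Mathlib

open Set Pointwise Filter Topology

lemma meagre_union' {X : Type*} [TopologicalSpace X] {s t : Set X}
    (hs : IsMeagre s) (ht : IsMeagre t) : IsMeagre (s ∪ t) := by
  rw [IsMeagre, compl_union]
  exact inter_mem hs ht

/-- translate of a meagre set is meagre -/
lemma meagre_translate {X : Type*} [AddCommGroup X] [TopologicalSpace X]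
    [IsTopologicalAddGroup X] {s : Set X} (hs : IsMeagre s) (t : X) :
    IsMeagre ((fun x => t + x) '' s) := by
  have h : (fun x => t + x) '' s = (Homeomorph.addLeft t).symm ⁻¹' s :=
    (Homeomorph.addLeft t).image_eq_preimage_symm s
  rw [h]
  exact hs.preimage_of_isOpenMap (Homeomorph.addLeft t).symm.continuous
    (Homeomorph.addLeft t).symm.isOpenMap

/-- A nonempty open set in a TVS is non-meagre, provided some non-meagre set exists. -/
lemma open_nonempty_nonmeagre {X : Type*} [AddCommGroup X] [Module ℝ X]
    [TopologicalSpace X] [IsTopologicalAddGroup X] [ContinuousSMul ℝ X]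
    {A V : Set X} (hA : ¬ IsMeagre A) (hV : IsOpen V) (hne : V.Nonempty) :
    ¬ IsMeagre V := by
  intro hmV
  apply hA
  obtain ⟨v, hv⟩ := hne
  -- W is a meagre open neighbourhood of 0
  set W : Set X := (fun x => v + x) ⁻¹' V with hW
  have hWopen : IsOpen W := hV.preimage (continuous_const.add continuous_id)
  have hW0 : (0 : X) ∈ W := by simp [hW, hv]
  have hWm : IsMeagre W :=
    hmV.preimage_of_isOpenMap (continuous_const.add continuous_id)
      (Homeomorph.addLeft v).isOpenMap
  -- X is covered by countably many dilations of W
  have hcover : (univ : Set X) ⊆ ⋃ n : ℕ, (fun x => ((n : ℝ) + 1)⁻¹ • x) ⁻¹' W := by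
    intro x _
    have h0 : Tendsto (fun n : ℕ => ((n : ℝ) + 1)⁻¹) atTop (𝓝 0) :=
      tendsto_one_div_add_atTop_nhds_zero_nat.congr (fun n => by rw [one_div])
    have h1 : Tendsto (fun n : ℕ => ((n : ℝ) + 1)⁻¹ • x) atTop (𝓝 0) := by
      simpa using h0.smul_const x
    have h2 : ∀ᶠ n : ℕ in atTop, ((n : ℝ) + 1)⁻¹ • x ∈ W :=
      h1.eventually_mem (hWopen.mem_nhds hW0)
    obtain ⟨n, hn⟩ := h2.exists
    exact mem_iUnion.2 ⟨n, hn⟩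
  have hm : IsMeagre (univ : Set X) := by
    refine IsMeagre.mono hcover (isMeagre_iUnion fun n => ?_)
    have hne : ((n : ℝ) + 1)⁻¹ ≠ 0 := by positivity
    exact hWm.preimage_of_isOpenMap (continuous_const_smul _) (isOpenMap_smul₀ hne)
  exact hm.mono (subset_univ A)

theorem piccard_key_inclusion
    (X : Type*) [AddCommGroup X] [Module ℝ X] [TopologicalSpace X]
    [IsTopologicalAddGroup X] [ContinuousSMul ℝ X]
    (A B U₁ U₂ : Set X)
    (hA_nonmeager : ¬ IsMeagre A) (hB_nonmeager : ¬ IsMeagre B)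
    (hU₁ : IsOpen U₁) (hU₂ : IsOpen U₂)
    (hAU₁ : IsMeagre (symmDiff A U₁)) (hBU₂ : IsMeagre (symmDiff B U₂)) :
    U₁ - U₂ ⊆ A - B ∧ ∀ t ∈ U₁ - U₂, (A ∩ ((fun b => t + b) '' B)).Nonempty := by
  have key : ∀ t ∈ U₁ - U₂, (A ∩ ((fun b => t + b) '' B)).Nonempty := by
    rintro t ⟨u₁, hu₁, u₂, hu₂, rfl⟩
    set t := u₁ - u₂ with ht
    set T : Set X := (fun b => t + b) '' B with hT
    set V : Set X := U₁ ∩ ((fun x => t + x) '' U₂) with hVdef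
    have hVopen : IsOpen V := hU₁.inter ((Homeomorph.addLeft t).isOpenMap _ hU₂)
    have hVne : V.Nonempty := ⟨u₁, hu₁, ⟨u₂, hu₂, sub_add_cancel u₁ u₂⟩⟩
    have hVnm : ¬ IsMeagre V := open_nonempty_nonmeagre hA_nonmeager hVopen hVne
    by_contra h
    rw [Set.not_nonempty_iff_eq_empty] at h
    apply hVnm
    have hsub : V ⊆ (V \ A) ∪ (V \ T) := by
      intro x hx
      by_cases hxA : x ∈ A
      · right
        refine ⟨hx, fun hxT => ?_⟩
        have hmem : x ∈ A ∩ T := ⟨hxA, hxT⟩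
        rw [h] at hmem
        exact hmem
      · exact Or.inl ⟨hx, hxA⟩
    have h1 : IsMeagre (V \ A) := by
      apply hAU₁.mono
      intro x hx
      exact Or.inr ⟨hx.1.1, hx.2⟩
    have h2 : IsMeagre (V \ T) := by
      have hs : V \ T ⊆ (fun x => t + x) '' (symmDiff B U₂) := by
        rintro x ⟨⟨hx1, y, hy, rfl⟩, hxT⟩
        exact ⟨y, Or.inr ⟨hy, fun hyB => hxT ⟨y, hyB, rfl⟩⟩, rfl⟩
      exact (meagre_translate hBU₂ t).mono hs
    exact (meagre_union' h1 h2).mono hsub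
  refine ⟨?_, key⟩
  intro t ht
  obtain ⟨x, hxA, b, hb, hxb⟩ := key t ht
  refine ⟨x, hxA, b, hb, ?_⟩
  rw [← hxb]
  exact add_sub_cancel_right t b
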